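/- Let q be a prime power and let b ∈ F_{q^2}^*, a = 0. Then f(x) = b x^q + x^{2q-1} is not a permutation polynomial of F_{q^2}; in fact ∑_{x ∈ F_{q^2}} f(x)^{q-1} = b^{q-2} ≠ 0. -/

import Mathlib

open Finset

/-- Power sums over a finite field: for `i ≠ 0`,
`∑ x, x^i` is `-1` if `(card - 1) ∣ i` and `0` otherwise. -/
lemma sum_pow_field_aux {K : Type*} [Field K] [Fintype K] (i : ℕ) (hi : i ≠ 0) :
    ∑ x : K, x ^ i = if (Fintype.card K - 1) ∣ i then -1 else 0 := by
  classical
  let φ : Kˣ ↪ K := ⟨fun x ↦ (x : K), Units.val_injective⟩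
  have huniv : univ.map φ = univ \ {0} := by
    ext x
    simpa only [mem_map, mem_univ, Function.Embedding.coeFn_mk, true_and, mem_sdiff,
      mem_singleton, φ] using
        (Iff.rfl : (∃ a : Kˣ, (a : K) = x) ↔ IsUnit x).trans isUnit_iff_ne_zero
  calc
    ∑ x : K, x ^ i = ∑ x ∈ univ \ {(0 : K)}, x ^ i := by
      rw [← sum_sdiff ({0} : Finset K).subset_univ, sum_singleton, zero_pow hi, add_zero]
    _ = ∑ x : Kˣ, (x ^ i : K) := by simp [φ, ← huniv, univ.sum_map φ]
    _ = _ := FiniteField.sum_pow_units K i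

/-- For `b ∈ F_{q²}*`, `f(x) = b x^q + x^(2q-1)` is not a permutation polynomial
of `F_{q²}`: indeed `∑_{x ∈ F_{q²}} f(x)^(q-1) = b^(q-2) ≠ 0`. -/
theorem stmt_4 (p n q : ℕ) (hp : p.Prime) (hn : 0 < n) (hq : q = p ^ n)
    (F : Type*) [Field F] [Fintype F] (hcard : Fintype.card F = q ^ 2)
    (b : F) (hb : b ≠ 0) :
    (∑ x : F, (b * x ^ q + x ^ (2 * q - 1)) ^ (q - 1) = b ^ (q - 2)) ∧
    b ^ (q - 2) ≠ 0 ∧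
    ¬ Function.Bijective (fun x : F => b * x ^ q + x ^ (2 * q - 1)) := by
  classical
  have hq2 : 2 ≤ q := by
    rw [hq]; exact Nat.one_lt_pow hn.ne' hp.one_lt
  have hqF : (q : F) = 0 := by
    have h := FiniteField.cast_card_eq_zero F
    rw [hcard] at h
    push_cast at h
    exact pow_eq_zero_iff (two_ne_zero) |>.mp h
  -- only k = q - 2 contributes to the power sum
  have hdvd : ∀ k, k ≤ q - 1 → ((q ^ 2 - 1 ∣ (2 * q - 1 - k) * (q - 1)) ↔ k = q - 2) := by
    obtain ⟨m, rfl⟩ : ∃ m, q = m + 2 := ⟨q - 2, by omega⟩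
    intro k hk
    have e1 : 2 * (m + 2) - 1 - k = 2 * m + 3 - k := by omega
    have e3 : (m + 2) ^ 2 - 1 = (m + 3) * (m + 1) := by
      have : (m + 2) ^ 2 = (m + 3) * (m + 1) + 1 := by ring
      omega
    rw [e1, e3, show (m + 2) - 1 = m + 1 from rfl, show (m + 2) - 2 = m from rfl,
      mul_dvd_mul_iff_right (show (m + 1 : ℕ) ≠ 0 by omega)]
    constructor
    · rintro ⟨c, hc⟩
      rcases c with _ | _ | c
      · omega
      · omega
      · exfalso
        have : (m + 3) * (c + 1 + 1) = (m+3)*c + 2*m + 6 := by ring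
        omega
    · rintro rfl
      exact ⟨1, by omega⟩
  have key : ∑ x : F, (b * x ^ q + x ^ (2 * q - 1)) ^ (q - 1) = b ^ (q - 2) := by
    have hfact : ∀ x : F, b * x ^ q + x ^ (2 * q - 1) = x ^ q * (b + x ^ (q - 1)) := by
      intro x
      have h : 2 * q - 1 = q + (q - 1) := by omega
      rw [h, pow_add]; ring
    calc ∑ x : F, (b * x ^ q + x ^ (2 * q - 1)) ^ (q - 1)
        = ∑ x : F, ∑ k ∈ range (q - 1 + 1),
            x ^ (q * (q - 1)) * (b ^ k * (x ^ (q - 1)) ^ (q - 1 - k) * ((q - 1).choose k : F)) := by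
          refine Finset.sum_congr rfl fun x _ => ?_
          rw [hfact, mul_pow, add_pow, ← pow_mul, Finset.mul_sum]
      _ = ∑ k ∈ range (q - 1 + 1), ((q - 1).choose k : F) * b ^ k *
            ∑ x : F, x ^ ((2 * q - 1 - k) * (q - 1)) := by
          rw [Finset.sum_comm]
          refine Finset.sum_congr rfl fun k hk => ?_
          rw [Finset.mul_sum]
          refine Finset.sum_congr rfl fun x _ => ?_
          have hk' : k ≤ q - 1 := Nat.lt_succ_iff.mp (mem_range.mp hk)
          rw [← pow_mul]
          rw [show (2 * q - 1 - k) * (q - 1) = q * (q - 1) + (q - 1) * (q - 1 - k) by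
            have h1 : 2 * q - 1 - k = q + (q - 1 - k) := by omega
            rw [h1, add_mul, mul_comm (q - 1 - k) (q - 1)], pow_add]
          ring
      _ = b ^ (q - 2) := by
          rw [Finset.sum_eq_single (q - 2)]
          · have hk' : q - 2 ≤ q - 1 := by omega
            rw [sum_pow_field_aux _ (Nat.mul_ne_zero (by omega) (by omega)), hcard,
              if_pos ((hdvd _ hk').mpr rfl)]
            have hch : ((q - 1).choose (q - 2) : ℕ) = q - 1 := by
              rw [show q - 2 = (q - 1) - 1 by omega, Nat.choose_symm (by omega),
                Nat.choose_one_right]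
            rw [hch]
            have : ((q - 1 : ℕ) : F) = -1 := by
              rw [Nat.cast_sub (by omega), hqF, Nat.cast_one, zero_sub]
            rw [this]; ring
          · intro k hk hne
            have hk' : k ≤ q - 1 := Nat.lt_succ_iff.mp (mem_range.mp hk)
            have hne0 : (2 * q - 1 - k) * (q - 1) ≠ 0 :=
              Nat.mul_ne_zero (by omega) (by omega)
            rw [sum_pow_field_aux _ hne0, hcard, if_neg (fun hd => hne ((hdvd k hk').mp hd)),
              mul_zero]
          · intro h
            exact absurd (mem_range.mpr (by omega)) h
  refine ⟨key, pow_ne_zero _ hb, fun hbij => ?_⟩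
  have h0 : ∑ x : F, (b * x ^ q + x ^ (2 * q - 1)) ^ (q - 1) = ∑ y : F, y ^ (q - 1) :=
    Fintype.sum_bijective _ hbij _ _ (fun x => rfl)
  have h1 : ∑ y : F, y ^ (q - 1) = 0 := by
    apply FiniteField.sum_pow_lt_card_sub_one
    rw [hcard]
    have hqq : q < q ^ 2 := by nlinarith
    exact Nat.sub_lt_sub_right (by omega) hqq
  exact pow_ne_zero (q - 2) hb (by rw [← key, h0, h1])
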